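/- arXiv:1112.1238 — 2 statements merged into one kernel-verified Lean document; each statement's English description precedes it below -/
import Mathlib

section
/- Let k | n, α a primitive element of F_{q^n}, and c = (q^n−1)/(q^k−1). Then the subspaces α^i·F_{q^k}, for i = 0,...,c−1, are pairwise distinct and pairwise intersect trivially, and their union is all of F_{q^n}; i.e., S = {α^i·F_{q^k} : 0 ≤ i < c} is a spread of k-dimensional F_q-subspaces of F_{q^n}. -/
open Module

/-- Let `k ∣ n`, `α` a primitive element of `F_{q^n}` and
`c = (q^n - 1)/(q^k - 1)`.  The subspaces `α^i · F_{q^k}`, `0 ≤ i < c`, are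
pairwise distinct, pairwise intersect trivially, and cover `F_{q^n}`; i.e.
they form a spread of `k`-dimensional `F_q`-subspaces of `F_{q^n}`. -/
theorem stmt15 (F K : Type*) [Field F] [Fintype F] [Field K] [Fintype K]
    [Algebra F K] (n k q c : ℕ) (hq : Fintype.card F = q)
    (hn : finrank F K = n) (hk : 0 < k) (hkn : k ∣ n)
    (hc : c = (q ^ n - 1) / (q ^ k - 1))
    (α : Kˣ) (hα : ∀ x : Kˣ, x ∈ Subgroup.zpowers α)
    (E : IntermediateField F K) (hE : Nat.card E = q ^ k)
    (W : ℕ → Submodule F K)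
    (hW : ∀ i, W i = Submodule.map (LinearMap.mulLeft F ((α : K) ^ i))
        (Subalgebra.toSubmodule E.toSubalgebra)) :
    (∀ i, finrank F ↥(W i) = k) ∧
    (∀ i j, i < c → j < c → i ≠ j → W i ≠ W j ∧ W i ⊓ W j = ⊥) ∧
    (∀ x : K, ∃ i, i < c ∧ x ∈ W i) := by
  classical
  have hq2 : 2 ≤ q := hq ▸ Fintype.one_lt_card
  have hq0 : 0 < q := by omega
  have hcardK : Fintype.card K = q ^ n := by
    rw [← hn, ← hq]; exact card_eq_pow_finrank
  have hqk1 : 0 < q ^ k - 1 := by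
    have : 2 ≤ q ^ k := le_trans hq2 (Nat.le_self_pow hk.ne' q)
    omega
  have hqn1 : 0 < q ^ n - 1 := by
    have hn0 : 0 < n := by
      rcases Nat.eq_zero_or_pos n with h | h
      · exfalso
        have : Fintype.card K = 1 := by rw [hcardK, h, pow_zero]
        exact (Fintype.one_lt_card (α := K)).ne' this
      · exact h
    have : 2 ≤ q ^ n := le_trans hq2 (Nat.le_self_pow (by omega) q)
    omega
  have hdvd : q ^ k - 1 ∣ q ^ n - 1 := by
    obtain ⟨m, rfl⟩ := hkn
    have := Nat.sub_dvd_pow_sub_pow (q ^ k) 1 m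
    simpa [pow_mul] using this
  have hcmul : c * (q ^ k - 1) = q ^ n - 1 := by
    rw [hc, Nat.div_mul_cancel hdvd]
  have hc0 : 0 < c := by
    rcases Nat.eq_zero_or_pos c with h | h
    · exfalso; rw [h, zero_mul] at hcmul; omega
    · exact h
  have hord : orderOf α = q ^ n - 1 := by
    rw [orderOf_eq_card_of_forall_mem_zpowers hα, Nat.card_eq_fintype_card,
      Fintype.card_units, hcardK]
  -- E characterization: x ^ (q^k-1) = 1 ↔ x ∈ E ∧ x ≠ 0
  have hcardE : Fintype.card E = q ^ k := by
    rw [← Nat.card_eq_fintype_card, hE]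
  have hmemE : ∀ x : K, x ^ (q ^ k - 1) = 1 ↔ (x ∈ E ∧ x ≠ 0) := by
    have hforward : ∀ x : K, x ∈ E → x ≠ 0 → x ^ (q ^ k - 1) = 1 := by
      intro x hx hx0
      have : (⟨x, hx⟩ : E) ^ (Fintype.card E - 1) = 1 :=
        FiniteField.pow_card_sub_one_eq_one _
          (fun h => hx0 (by simpa using congrArg Subtype.val h))
      rw [hcardE] at this
      have := congrArg (Subtype.val) this
      push_cast at this
      simpa using this
    -- counting
    set T := (Polynomial.nthRoots (q ^ k - 1) (1 : K)).toFinset with hT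
    have hTmem : ∀ x : K, x ∈ T ↔ x ^ (q ^ k - 1) = 1 := by
      intro x
      rw [hT, Multiset.mem_toFinset, Polynomial.mem_nthRoots hqk1]
    have hTcard : T.card ≤ q ^ k - 1 :=
      le_trans (Multiset.toFinset_card_le _) (Polynomial.card_nthRoots _ _)
    set Ef : Finset K := (Set.toFinset (E : Set K)).erase 0 with hEf
    have hEfmem : ∀ x : K, x ∈ Ef ↔ (x ∈ E ∧ x ≠ 0) := by
      intro x
      rw [hEf, Finset.mem_erase, Set.mem_toFinset]
      exact ⟨fun h => ⟨h.2, h.1⟩, fun h => ⟨h.2, h.1⟩⟩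
    have hEfcard : Ef.card = q ^ k - 1 := by
      rw [hEf, Finset.card_erase_of_mem (by simp [E.zero_mem]), Set.toFinset_card]
      rw [show Fintype.card ↥(E : Set K) = Fintype.card E from rfl, hcardE]
    have hsub : Ef ⊆ T := by
      intro x hx
      rw [hEfmem] at hx
      rw [hTmem]
      exact hforward x hx.1 hx.2
    have heq : Ef = T :=
      Finset.eq_of_subset_of_card_le hsub (by omega)
    intro x
    rw [← hTmem, ← heq, hEfmem]
  have hαne : ∀ i : ℕ, ((α : K) ^ i) ≠ 0 := fun i => pow_ne_zero _ (Units.ne_zero α)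
  -- key: α^m ∈ E ↔ c ∣ m
  have hB : ∀ m : ℕ, ((α : K) ^ m ∈ E ↔ c ∣ m) := by
    intro m
    have h1 : ((α : K) ^ m) ^ (q ^ k - 1) = 1 ↔ (α ^ (m * (q ^ k - 1)) = (1 : Kˣ)) := by
      rw [← pow_mul]
      constructor
      · intro h; ext; push_cast; exact h
      · intro h; have := congrArg (Units.val) h; push_cast at this; exact this
    have h2 : (α ^ (m * (q ^ k - 1)) = (1 : Kˣ)) ↔ (q ^ n - 1) ∣ m * (q ^ k - 1) := by
      rw [← hord, orderOf_dvd_iff_pow_eq_one]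
    have h3 : (q ^ n - 1) ∣ m * (q ^ k - 1) ↔ c ∣ m := by
      rw [← hcmul]
      exact (Nat.mul_dvd_mul_iff_right hqk1)
    constructor
    · intro hmE
      exact h3.mp (h2.mp (h1.mp ((hmemE _).mpr ⟨hmE, hαne m⟩)))
    · intro hcm
      exact ((hmemE _).mp (h1.mpr (h2.mpr (h3.mpr hcm)))).1
  have hmulinj : ∀ i : ℕ, Function.Injective (LinearMap.mulLeft F ((α : K) ^ i)) := by
    intro i x y h
    simp only [LinearMap.mulLeft_apply] at h
    exact mul_left_cancel₀ (hαne i) h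
  have hmemW : ∀ i m : ℕ, ((α : K) ^ m ∈ W i ↔ (∃ e ∈ E, (α : K) ^ i * e = (α : K) ^ m)) := by
    intro i m
    rw [hW i, Submodule.mem_map]
    simp only [LinearMap.mulLeft_apply]
    constructor
    · rintro ⟨e, he, h⟩; exact ⟨e, he, h⟩
    · rintro ⟨e, he, h⟩; exact ⟨e, he, h⟩
  -- trivial intersection helper, for i ≤ j
  have hinf : ∀ i j : ℕ, i ≤ j → ¬ c ∣ (j - i) → W i ⊓ W j = ⊥ := by
    intro i j hij hndvd
    rw [eq_bot_iff]
    intro x hx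
    rw [Submodule.mem_inf, hW i, hW j] at hx
    obtain ⟨⟨e, he, hxe⟩, ⟨e', he', hxe'⟩⟩ := hx
    simp only [LinearMap.mulLeft_apply, Subalgebra.mem_toSubmodule] at hxe hxe' he he'
    rw [Submodule.mem_bot]
    by_contra hx0
    have he'0 : e' ≠ 0 := by rintro rfl; rw [mul_zero] at hxe'; exact hx0 hxe'.symm
    have hkey : (α : K) ^ (j - i) = e * e'⁻¹ := by
      have : (α : K) ^ i * e = (α : K) ^ j * e' := by rw [hxe, hxe']
      have hji : (α : K) ^ j = (α : K) ^ i * (α : K) ^ (j - i) := by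
        rw [← pow_add, Nat.add_sub_cancel' hij]
      rw [hji, mul_assoc] at this
      have he2 : e = (α : K) ^ (j - i) * e' := mul_left_cancel₀ (hαne i) this
      rw [he2, mul_assoc, mul_inv_cancel₀ he'0, mul_one]
    have : (α : K) ^ (j - i) ∈ E := by
      rw [hkey]
      exact E.mul_mem he (E.inv_mem he')
    exact hndvd ((hB _).mp this)
  have hndvd : ∀ i j : ℕ, i < c → j < c → i < j → ¬ c ∣ (j - i) := by
    intro i j hi hj hij
    exact Nat.not_dvd_of_pos_of_lt (by omega) (by omega)
  have hinf' : ∀ i j : ℕ, i < c → j < c → i ≠ j → W i ⊓ W j = ⊥ := by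
    intro i j hi hj hij
    rcases lt_or_gt_of_ne hij with h | h
    · exact hinf i j h.le (hndvd i j hi hj h)
    · rw [inf_comm]
      exact hinf j i h.le (hndvd j i hj hi h)
  have hself : ∀ i : ℕ, (α : K) ^ i ∈ W i := by
    intro i
    rw [hmemW]
    exact ⟨1, E.one_mem, mul_one _⟩
  refine ⟨?_, ?_, ?_⟩
  · -- dimension
    intro i
    have hrk : finrank F ↥E = k := by
      have h1 : Fintype.card E = q ^ finrank F ↥E := by
        rw [← hq]; exact card_eq_pow_finrank
      rw [hcardE] at h1
      exact (Nat.pow_right_injective hq2 h1.symm)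
    rw [hW i]
    rw [← LinearEquiv.finrank_eq
      (Submodule.equivMapOfInjective _ (hmulinj i) (Subalgebra.toSubmodule E.toSubalgebra))]
    rw [Subalgebra.finrank_toSubmodule]
    exact hrk
  · intro i j hi hj hij
    have hinfij := hinf' i j hi hj hij
    refine ⟨?_, hinfij⟩
    intro hWeq
    have : (α : K) ^ i ∈ W i ⊓ W j := by
      rw [Submodule.mem_inf]
      exact ⟨hself i, hWeq ▸ hself i⟩
    rw [hinfij, Submodule.mem_bot] at this
    exact hαne i this
  · intro x
    rcases eq_or_ne x 0 with rfl | hx0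
    · exact ⟨0, hc0, (W 0).zero_mem⟩
    · lift x to Kˣ using isUnit_iff_ne_zero.mpr hx0
      obtain ⟨m, hm⟩ := (mem_powers_iff_mem_zpowers).mpr (hα x)
      refine ⟨m % c, Nat.mod_lt _ hc0, ?_⟩
      have hmm : (α : K) ^ m = x := by rw [← hm]; push_cast; ring
      have : (α : K) ^ m ∈ W (m % c) := by
        rw [hmemW]
        refine ⟨(α : K) ^ (c * (m / c)), (hB _).mpr ⟨_, rfl⟩, ?_⟩
        rw [← pow_add]
        congr 1
        exact Nat.mod_add_div m c
      rwa [hmm] at this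
end

section
/- Let V be a k-dimensional subspace of F_q^n and R a k'-dimensional subspace with basis r_1,...,r_{k'}, such that R = V' ⊕ E where V' ≤ V and dim E = f < k'. Then the set L_f of all linear combinations of at most f+1 of the basis vectors r_i contains k'−f linearly independent elements of V. -/
open Module

/-- Let `V` be a `k`-dimensional subspace and `R` a `k'`-dimensional subspace
with basis `r_1, …, r_{k'}` such that `R = V' ⊕ E` with `V' ≤ V` and
`dim E = f < k'`.  Then the set `L_f` of linear combinations of at most `f+1`
of the basis vectors contains `k' - f` linearly independent elements of `V`. -/
theorem stmt19 (F : Type*) [Field F] [Fintype F] (n k k' f : ℕ)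
    (V V' E R : Submodule F (Fin n → F))
    (hV : finrank F ↥V = k)
    (r : Fin k' → (Fin n → F))
    (hind : LinearIndependent F r)
    (hspan : R = Submodule.span F (Set.range r))
    (hV'V : V' ≤ V) (hsum : R = V' ⊔ E) (hdisj : V' ⊓ E = ⊥)
    (hE : finrank F ↥E = f) (hf : f < k')
    (L : Set (Fin n → F))
    (hL : L = {x | ∃ (I : Finset (Fin k')) (lam : Fin k' → F),
      I.card ≤ f + 1 ∧ x = ∑ i ∈ I, lam i • r i}) :
    ∃ s : Fin (k' - f) → (Fin n → F),
      LinearIndependent F s ∧ ∀ i, s i ∈ V ∧ s i ∈ L := by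
  classical
  subst hspan hL
  -- decompose each `r i` as `v i + w i` with `v i ∈ V'`, `w i ∈ E`
  have hrR : ∀ i, r i ∈ V' ⊔ E := fun i => by
    rw [← hsum]; exact Submodule.subset_span (Set.mem_range_self i)
  choose v hv w hw hvw using fun i => Submodule.mem_sup.mp (hrR i)
  -- a linearly independent subset `b` of the `w i` spanning all of them
  obtain ⟨b, hbsub, hbspan, hbind⟩ := exists_linearIndependent F (Set.range w)
  have hbfin : b.Finite := (Set.finite_range w).subset hbsub
  haveI : Fintype b := hbfin.fintype
  have hbE : Submodule.span F b ≤ E := Submodule.span_le.mpr (fun x hx => by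
    obtain ⟨i, rfl⟩ := hbsub hx; exact hw i)
  have hcardb : b.toFinset.card ≤ f := by
    rw [← hE, ← finrank_span_set_eq_card hbind]
    exact Submodule.finrank_mono hbE
  -- index set B with `b ⊆ w '' B`, `|B| ≤ f`
  choose idx hidx using fun (x : b) => hbsub x.2
  let B : Finset (Fin k') := Finset.univ.image idx
  have hBcard : B.card ≤ f := by
    refine le_trans (le_trans Finset.card_image_le ?_) hcardb
    simp [Set.toFinset_card]
  have hbsubB : b ⊆ w '' ↑B := by
    intro x hx
    exact ⟨idx ⟨x, hx⟩, by simp [B], hidx ⟨x, hx⟩⟩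
  have hwmem : ∀ i0, w i0 ∈ Submodule.span F (w '' ↑B) := by
    intro i0
    have h1 : w i0 ∈ Submodule.span F (Set.range w) :=
      Submodule.subset_span ⟨i0, rfl⟩
    rw [← hbspan] at h1
    exact Submodule.span_mono hbsubB h1
  choose c hcsupp hcsum using
    fun i0 => (Finsupp.mem_span_image_iff_linearCombination F).mp (hwmem i0)
  have hcz : ∀ i0 j, j ∉ B → c i0 j = 0 := by
    intro i0 j hj
    by_contra h
    exact hj (hcsupp i0 (Finsupp.mem_support_iff.mpr h))
  have hwB : ∀ i0, ∑ j ∈ B, c i0 j • w j = w i0 := by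
    intro i0
    rw [← hcsum i0, Finsupp.linearCombination_apply, Finsupp.sum]
    exact (Finset.sum_subset (hcsupp i0) (fun j _ hj => by
      rw [Finsupp.notMem_support_iff.mp hj, zero_smul])).symm
  -- choose `k' - f` indices outside `B`
  have hBc : k' - f ≤ Bᶜ.card := by
    rw [Finset.card_compl, Fintype.card_fin]
    omega
  obtain ⟨C, hCsub, hCcard⟩ := Finset.exists_subset_card_eq hBc
  let ι : Fin (k' - f) → Fin k' := fun i => (C.orderIsoOfFin hCcard i : Fin k')
  have hιinj : Function.Injective ι := fun a b hab =>
    (C.orderIsoOfFin hCcard).injective (Subtype.ext hab)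
  have hιB : ∀ i, ι i ∉ B := fun i =>
    Finset.mem_compl.mp (hCsub (C.orderIsoOfFin hCcard i).2)
  -- the candidate vectors
  set s : Fin (k' - f) → (Fin n → F) :=
    fun i => r (ι i) - ∑ j ∈ B, c (ι i) j • r j with hs
  refine ⟨s, ?_, ?_⟩
  · -- linear independence
    have hrepr : ∀ i, s i = ∑ j : Fin k',
        ((if j = ι i then (1 : F) else 0) - c (ι i) j) • r j := by
      intro i
      rw [hs]
      simp only [sub_smul, Finset.sum_sub_distrib, ite_smul, one_smul, zero_smul,
        Finset.sum_ite_eq', Finset.mem_univ, if_true]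
      congr 1
      exact (Finset.sum_subset (Finset.subset_univ B)
        (fun j _ hj => by rw [hcz _ j hj, zero_smul]))
    rw [Fintype.linearIndependent_iff]
    intro g hg i0
    have hg' : ∑ j : Fin k',
        (∑ i, g i * ((if j = ι i then (1 : F) else 0) - c (ι i) j)) • r j = 0 := by
      rw [← hg]
      simp_rw [hrepr, Finset.smul_sum, smul_smul]
      rw [Finset.sum_comm]
      simp_rw [Finset.sum_smul]
    have hval := Fintype.linearIndependent_iff.mp hind _ hg' (ι i0)
    have heval : ∀ i, g i * ((if ι i0 = ι i then (1 : F) else 0) - c (ι i) (ι i0))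
        = if i0 = i then g i else 0 := by
      intro i
      rw [hcz (ι i) (ι i0) (hιB i0)]
      by_cases h : i0 = i
      · simp [h]
      · have hne : ¬ ι i0 = ι i := fun hc => h (hιinj hc)
        simp [h, hne]
    rw [Finset.sum_congr rfl (fun i _ => heval i)] at hval
    simpa using hval
  · intro i
    constructor
    · -- membership in V
      have hsv : s i = v (ι i) - ∑ j ∈ B, c (ι i) j • v j := by
        rw [hs]
        simp only
        have h1 : ∀ j, r j = v j + w j := fun j => (hvw j).symm
        simp_rw [h1, smul_add, Finset.sum_add_distrib, hwB]
        abel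
      rw [hsv]
      exact hV'V (Submodule.sub_mem _ (hv _)
        (Submodule.sum_mem _ (fun j _ => Submodule.smul_mem _ _ (hv j))))
    · -- membership in L
      refine ⟨insert (ι i) B, fun j => if j = ι i then 1 else -(c (ι i) j), ?_, ?_⟩
      · calc (insert (ι i) B).card ≤ B.card + 1 := Finset.card_insert_le _ _
          _ ≤ f + 1 := by omega
      · rw [Finset.sum_insert (hιB i)]
        show s i = (if ι i = ι i then (1:F) else -(c (ι i)) (ι i)) • r (ι i) +
          ∑ x ∈ B, (if x = ι i then (1:F) else -(c (ι i)) x) • r x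
        rw [if_pos rfl, one_smul]
        show r (ι i) - ∑ j ∈ B, (c (ι i)) j • r j = _
        rw [sub_eq_add_neg, ← Finset.sum_neg_distrib]
        congr 1
        refine Finset.sum_congr rfl (fun j hj => ?_)
        rw [if_neg (fun (h : j = ι i) => hιB i (h ▸ hj)), neg_smul]
end
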